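/- Projection formula: for a map φ: X → Y of finite sets and Plott functions f on X and g on Y, φ_*(f ∧ φ^*(g)) = φ_*(f) ∧ g, where ∧ denotes the meet in the lattice of Plott functions (the largest Plott function below both arguments) and φ^* is the inverse image (the largest Plott function h with φ_*(h) ≤ g). -/

import Mathlib

open Set

variable {X Y Z : Type*}

/-- A choice function: `f A ⊆ A` for all `A`. -/
def IsChoice (f : Set X → Set X) : Prop := ∀ A, f A ⊆ A

/-- A Plott function: choice function satisfying path independence. -/
def IsPlott (f : Set X → Set X) : Prop :=
  IsChoice f ∧ ∀ A B : Set X, f (A ∪ B) = f (f A ∪ B)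

/-- Direct image of a choice function along `φ`. -/
def dimage (φ : X → Y) (f : Set X → Set X) : Set Y → Set Y :=
  fun B => φ '' f (φ ⁻¹' B)

/-- Inverse image of a choice function: the join (pointwise union) of all Plott
functions whose direct image is pointwise below `g`. -/
def pinv (φ : X → Y) (g : Set Y → Set Y) : Set X → Set X :=
  fun A => {x | ∃ h : Set X → Set X, IsPlott h ∧
    (∀ B : Set Y, dimage φ h B ⊆ g B) ∧ x ∈ h A}

/-- The meet of two choice functions in the lattice of Plott functions: the join
(pointwise union) of all Plott functions below both, which is the largest Plott
function below both. -/
def plottMeet (f g : Set X → Set X) : Set X → Set X :=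
  fun A => {x | ∃ h : Set X → Set X, IsPlott h ∧
    (∀ B : Set X, h B ⊆ f B) ∧ (∀ B : Set X, h B ⊆ g B) ∧ x ∈ h A}

/-- Chernoff / heritage property of Plott functions. -/
lemma chernoff {f : Set X → Set X} (hf : IsPlott f) {A B : Set X} (hAB : A ⊆ B) :
    f B ∩ A ⊆ f A := by
  have hB : B = A ∪ (B \ A) := (union_diff_cancel hAB).symm
  have h1 : f B ⊆ f A ∪ (B \ A) := by
    calc f B = f (A ∪ (B \ A)) := by rw [← hB]
    _ = f (f A ∪ (B \ A)) := hf.2 A (B \ A)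
    _ ⊆ f A ∪ (B \ A) := hf.1 _
  rintro y ⟨hyB, hyA⟩
  rcases h1 hyB with h | h
  · exact h
  · exact absurd hyA h.2.elim

/-- Outcast property of Plott functions. -/
lemma outcast {f : Set X → Set X} (hf : IsPlott f) {A B : Set X}
    (h1 : f B ⊆ A) (h2 : A ⊆ B) : f A = f B := by
  calc f A = f (f B ∪ A) := by rw [union_eq_self_of_subset_left h1]
  _ = f (B ∪ A) := (hf.2 B A).symm
  _ = f B := by rw [union_eq_self_of_subset_right h2]

/-- Prepend an element to a choice function: choose `x` if present, otherwise defer. -/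
def prep (x : X) (k : Set X → Set X) : Set X → Set X :=
  fun A => {y | (x ∈ A ∧ y = x) ∨ (x ∉ A ∧ y ∈ k A)}

lemma prep_mem {x : X} {k : Set X → Set X} {A : Set X} (hx : x ∈ A) :
    prep x k A = {x} := by
  ext y; simp [prep, hx]

lemma prep_not_mem {x : X} {k : Set X → Set X} {A : Set X} (hx : x ∉ A) :
    prep x k A = k A := by
  ext y; simp [prep, hx]

lemma prep_plott {x : X} {k : Set X → Set X} (hk : IsPlott k) : IsPlott (prep x k) := by
  constructor
  · rintro A y (⟨hxA, rfl⟩ | ⟨_, hy⟩)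
    · exact hxA
    · exact hk.1 A hy
  · intro A B
    by_cases hxA : x ∈ A
    · rw [prep_mem hxA, prep_mem (A := A ∪ B) (Or.inl hxA),
        prep_mem (A := ({x} : Set X) ∪ B) (Or.inl rfl)]
    · rw [prep_not_mem hxA]
      by_cases hxB : x ∈ B
      · rw [prep_mem (A := A ∪ B) (Or.inr hxB), prep_mem (A := k A ∪ B) (Or.inr hxB)]
      · have hxAB : x ∉ A ∪ B := by rintro (h | h) <;> [exact hxA h; exact hxB h]
        have hxkAB : x ∉ k A ∪ B := by
          rintro (h | h)
          · exact hxA (hk.1 A h)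
          · exact hxB h
        rw [prep_not_mem hxAB, prep_not_mem hxkAB]
        exact hk.2 A B

lemma bot_plott : IsPlott (fun _ : Set X => (∅ : Set X)) := by
  constructor
  · intro A; exact empty_subset A
  · intro A B; rfl

lemma dimage_plott {φ : X → Y} {f : Set X → Set X} (hf : IsPlott f) :
    IsPlott (dimage φ f) := by
  constructor
  · rintro B y ⟨x, hx, rfl⟩
    exact hf.1 _ hx
  · intro A B
    show φ '' f (φ ⁻¹' (A ∪ B)) = φ '' f (φ ⁻¹' (φ '' f (φ ⁻¹' A) ∪ B))
    set S := f (φ ⁻¹' A) with hS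
    set T := φ ⁻¹' (φ '' S) with hT
    have hST : S ⊆ T := subset_preimage_image φ S
    have hTA : T ⊆ φ ⁻¹' A := preimage_mono (image_subset_iff.2 (hf.1 _))
    have key : f (T ∪ φ ⁻¹' B) = f (φ ⁻¹' A ∪ φ ⁻¹' B) := by
      apply outcast hf
      · have h1 : f (φ ⁻¹' A ∪ φ ⁻¹' B) = f (S ∪ φ ⁻¹' B) := hf.2 _ _
        rw [h1]
        exact (hf.1 _).trans (union_subset_union_left _ hST)
      · exact union_subset_union_left _ hTA
    rw [preimage_union, preimage_union, key]

/-- The lifting lemma: a greedy double-chain construction producing a Plott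
function `k ≤ f` with `φ_* k ≤ h` capturing a prescribed element `y0 ∈ h B0`. -/
lemma lift_chain {X Y : Type*} [Fintype X] (φ : X → Y) (f : Set X → Set X)
    (hf : IsPlott f) (h : Set Y → Set Y) (hh : IsPlott h) (B0 : Set Y) (y0 : Y)
    (hy0 : y0 ∈ h B0) :
    ∀ (n : ℕ) (C : Set X) (W : Set Y), C.ncard ≤ n →
      (∀ w ∈ W, ∃ x, x ∉ C ∧ φ x = w) →
      W ∩ B0 = ∅ →
      (∀ B : Set Y, B ∩ W = ∅ → h B ⊆ φ '' f (C ∩ φ ⁻¹' B)) →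
      φ ⁻¹' B0 ⊆ C →
      ∃ k : Set X → Set X, IsPlott k ∧ (∀ A, A ⊆ C → k A ⊆ f A) ∧
        (∀ B : Set Y, φ ⁻¹' B ⊆ C → φ '' k (φ ⁻¹' B) ⊆ h B) ∧
        y0 ∈ φ '' k (φ ⁻¹' B0) := by
  intro n
  induction n with
  | zero =>
    intro C W hcard hW hWB0 hK hB0C
    exfalso
    have hC : C = ∅ := by
      have := Nat.le_zero.mp hcard
      rwa [Set.ncard_eq_zero (toFinite C)] at this
    have h1 : h B0 ⊆ φ '' f (C ∩ φ ⁻¹' B0) := hK B0 (by rw [inter_comm]; exact hWB0)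
    have h2 : f (C ∩ φ ⁻¹' B0) = ∅ := by
      rw [hC, empty_inter]
      exact eq_empty_of_subset_empty (hf.1 ∅)
    rw [h2, image_empty] at h1
    exact h1 hy0
  | succ n IH =>
    intro C W hcard hW hWB0 hK hB0C
    have hBW : ∀ B : Set Y, φ ⁻¹' B ⊆ C → B ∩ W = ∅ := by
      intro B hB
      rw [eq_empty_iff_forall_notMem]
      rintro w ⟨hwB, hwW⟩
      obtain ⟨x, hxC, rfl⟩ := hW w hwW
      exact hxC (hB hwB)
    by_cases hc1 : ∃ x ∈ f C, φ x ∈ W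
    · -- Case 1: pick an element whose value was already seen
      obtain ⟨x, hxf, hxW⟩ := hc1
      have hxC : x ∈ C := hf.1 C hxf
      have hx0 : x ∉ φ ⁻¹' B0 := by
        intro hx
        have : φ x ∈ W ∩ B0 := ⟨hxW, hx⟩
        rw [hWB0] at this; exact this
      have hcard' : (C \ {x}).ncard ≤ n := by
        have := Set.ncard_diff_singleton_lt_of_mem hxC (toFinite C)
        omega
      have hpre : ∀ B : Set Y, B ∩ W = ∅ → (C \ {x}) ∩ φ ⁻¹' B = C ∩ φ ⁻¹' B := by
        intro B hBWe
        have hxB : x ∉ φ ⁻¹' B := by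
          intro hxB
          have : φ x ∈ B ∩ W := ⟨hxB, hxW⟩
          rw [hBWe] at this; exact this
        ext z
        constructor
        · rintro ⟨⟨hz, _⟩, hzB⟩; exact ⟨hz, hzB⟩
        · rintro ⟨hz, hzB⟩
          exact ⟨⟨hz, fun he => hxB (he ▸ hzB)⟩, hzB⟩
      obtain ⟨k', hk'P, hk'f, hk'h, hk'y⟩ :=
        IH (C \ {x}) W hcard'
          (fun w hw => by
            obtain ⟨x', hx', he⟩ := hW w hw
            exact ⟨x', fun hc => hx' hc.1, he⟩)
          hWB0
          (fun B hB => by rw [hpre B hB]; exact hK B hB)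
          (fun z hz => ⟨hB0C hz, fun he => hx0 (he ▸ hz)⟩)
      refine ⟨prep x k', prep_plott hk'P, ?_, ?_, ?_⟩
      · intro A hA
        by_cases hxA : x ∈ A
        · rw [prep_mem hxA]
          rintro y rfl
          exact chernoff hf hA ⟨hxf, hxA⟩
        · rw [prep_not_mem hxA]
          exact hk'f A (fun z hz => ⟨hA hz, fun he => hxA (he ▸ hz)⟩)
      · intro B hB
        have hBWe := hBW B hB
        have hxB : x ∉ φ ⁻¹' B := by
          intro hxB
          have : φ x ∈ B ∩ W := ⟨hxB, hxW⟩
          rw [hBWe] at this; exact this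
        rw [prep_not_mem hxB]
        exact hk'h B (fun z hz => ⟨hB hz, fun he => hxB (he ▸ hz)⟩)
      · rw [prep_not_mem hx0]; exact hk'y
    · push_neg at hc1
      have hfCW : f C ⊆ C ∩ φ ⁻¹' Wᶜ := fun z hz => ⟨hf.1 C hz, hc1 z hz⟩
      have houtc : f (C ∩ φ ⁻¹' Wᶜ) = f C := outcast hf hfCW inter_subset_left
      have hWc : h Wᶜ ⊆ φ '' f C := by
        have := hK Wᶜ (compl_inter_self W)
        rwa [houtc] at this
      by_cases hc2 : ∃ v ∈ h Wᶜ, v ∉ B0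
      · -- Case 2a: open a new value outside B0
        obtain ⟨v, hvh, hvB0⟩ := hc2
        obtain ⟨x, hxf, hφx⟩ := hWc hvh
        have hxC : x ∈ C := hf.1 C hxf
        have hx0 : x ∉ φ ⁻¹' B0 := fun hx => hvB0 (hφx ▸ hx)
        have hcard' : (C \ {x}).ncard ≤ n := by
          have := Set.ncard_diff_singleton_lt_of_mem hxC (toFinite C)
          omega
        obtain ⟨k', hk'P, hk'f, hk'h, hk'y⟩ :=
          IH (C \ {x}) (W ∪ {v}) hcard'
            (by
              rintro w (hw | hw)
              · obtain ⟨x', hx', he⟩ := hW w hw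
                exact ⟨x', fun hc => hx' hc.1, he⟩
              · rcases hw with rfl
                exact ⟨x, fun hc => hc.2 rfl, hφx⟩)
            (by
              rw [eq_empty_iff_forall_notMem]
              rintro w ⟨hw | hw, hwB0⟩
              · have : w ∈ W ∩ B0 := ⟨hw, hwB0⟩
                rw [hWB0] at this; exact this
              · rcases hw with rfl; exact hvB0 hwB0)
            (by
              intro B hB
              have hBW' : B ∩ W = ∅ := by
                rw [eq_empty_iff_forall_notMem]
                rintro w ⟨hwB, hwW⟩
                have : w ∈ B ∩ (W ∪ {v}) := ⟨hwB, Or.inl hwW⟩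
                rw [hB] at this; exact this
              have hvB : v ∉ B := by
                intro hvB
                have : v ∈ B ∩ (W ∪ {v}) := ⟨hvB, Or.inr rfl⟩
                rw [hB] at this; exact this
              have hxB : x ∉ φ ⁻¹' B := fun hxB => hvB (hφx ▸ hxB)
              have : (C \ {x}) ∩ φ ⁻¹' B = C ∩ φ ⁻¹' B := by
                ext z
                constructor
                · rintro ⟨⟨hz, _⟩, hzB⟩; exact ⟨hz, hzB⟩
                · rintro ⟨hz, hzB⟩
                  exact ⟨⟨hz, fun he => hxB (he ▸ hzB)⟩, hzB⟩
              rw [this]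
              exact hK B hBW')
            (fun z hz => ⟨hB0C hz, fun he => hx0 (he ▸ hz)⟩)
        refine ⟨prep x k', prep_plott hk'P, ?_, ?_, ?_⟩
        · intro A hA
          by_cases hxA : x ∈ A
          · rw [prep_mem hxA]
            rintro y rfl
            exact chernoff hf hA ⟨hxf, hxA⟩
          · rw [prep_not_mem hxA]
            exact hk'f A (fun z hz => ⟨hA hz, fun he => hxA (he ▸ hz)⟩)
        · intro B hB
          have hBWe := hBW B hB
          by_cases hxB : x ∈ φ ⁻¹' B
          · rw [prep_mem hxB, image_singleton]
            rintro y rfl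
            rw [hφx]
            have hBWc : B ⊆ Wᶜ := by
              intro z hz hzW
              have : z ∈ B ∩ W := ⟨hz, hzW⟩
              rw [hBWe] at this; exact this
            exact chernoff hh hBWc ⟨hvh, hφx ▸ hxB⟩
          · rw [prep_not_mem hxB]
            exact hk'h B (fun z hz => ⟨hB hz, fun he => hxB (he ▸ hz)⟩)
        · rw [prep_not_mem hx0]; exact hk'y
      · -- Case 2b: terminal step, capture y0
        push_neg at hc2
        have hsub : h Wᶜ ⊆ B0 := hc2
        have hB0W : B0 ⊆ Wᶜ := by
          intro b hb hbW
          have : b ∈ W ∩ B0 := ⟨hbW, hb⟩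
          rw [hWB0] at this; exact this
        have heq : h B0 = h Wᶜ := outcast hh hsub hB0W
        have hy0' : y0 ∈ h Wᶜ := heq ▸ hy0
        obtain ⟨x, hxf, hφx⟩ := hWc hy0'
        refine ⟨prep x (fun _ => ∅), prep_plott bot_plott, ?_, ?_, ?_⟩
        · intro A hA
          by_cases hxA : x ∈ A
          · rw [prep_mem hxA]
            rintro y rfl
            exact chernoff hf hA ⟨hxf, hxA⟩
          · rw [prep_not_mem hxA]
            exact empty_subset _
        · intro B hB
          have hBWe := hBW B hB
          by_cases hxB : x ∈ φ ⁻¹' B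
          · rw [prep_mem hxB, image_singleton]
            rintro y rfl
            rw [hφx]
            have hBWc : B ⊆ Wᶜ := by
              intro z hz hzW
              have : z ∈ B ∩ W := ⟨hz, hzW⟩
              rw [hBWe] at this; exact this
            exact chernoff hh hBWc ⟨hy0', hφx ▸ hxB⟩
          · rw [prep_not_mem hxB, image_empty]
            exact empty_subset _
        · have hxB0 : x ∈ φ ⁻¹' B0 := by
            rw [mem_preimage, hφx]
            exact hh.1 B0 hy0
          rw [prep_mem hxB0, image_singleton]
          exact hφx ▸ rfl

/-- the projection formula `φ_*(f ∧ φ^*(g)) = φ_*(f) ∧ g`. -/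
theorem projection_formula {X Y : Type*} [Fintype X] [Fintype Y] (φ : X → Y)
    (f : Set X → Set X) (hf : IsPlott f)
    (g : Set Y → Set Y) (hg : IsPlott g) :
    dimage φ (plottMeet f (pinv φ g)) = plottMeet (dimage φ f) g := by
  funext B0
  ext y0
  constructor
  · rintro ⟨x0, hx0, rfl⟩
    obtain ⟨k, hkP, hkf, hkp, hxk⟩ := hx0
    have hkg : ∀ B : Set Y, dimage φ k B ⊆ g B := by
      rintro B y ⟨x, hx, rfl⟩
      obtain ⟨h', hP', hd', hx'⟩ := hkp _ hx
      exact hd' B ⟨x, hx', rfl⟩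
    exact ⟨dimage φ k, dimage_plott hkP,
      fun B => image_mono (f := φ) (hkf _),
      hkg, ⟨x0, hxk, rfl⟩⟩
  · rintro ⟨h, hhP, hhf, hhg, hy0⟩
    obtain ⟨k, hkP, hkf, hkh, hky⟩ :=
      lift_chain φ f hf h hhP B0 y0 hy0 ((univ : Set X).ncard) univ ∅ le_rfl
        (fun w hw => absurd hw (notMem_empty w))
        (empty_inter B0)
        (fun B _ => by
          have := hhf B
          simpa [dimage, univ_inter] using this)
        (subset_univ _)
    obtain ⟨x0, hx0k, hφ⟩ := hky
    refine ⟨x0, ?_, hφ⟩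
    exact ⟨k, hkP, fun A => hkf A (subset_univ A),
      fun A x hx => ⟨k, hkP,
        fun B => (hkh B (subset_univ _)).trans (hhg B), hx⟩,
      hx0k⟩
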